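/- Let a : ℝ → ℝ be analytic and non-polynomial, let x₁, ..., xₘ be reals with 0 < |x₁| < ... < |xₘ|, and let λ₁, ..., λₘ be rationals, not all zero. Then the function g(γ) = λ₁ a(γx₁) + ... + λₘ a(γxₘ) has only finitely many roots in [0,1]. -/

import Mathlib

open Filter Topology Polynomial
open scoped Nat

private lemma iterDeriv_cmul {n : ℕ} {f : ℝ → ℝ} (h : ContDiff ℝ n f) (c x : ℝ) :
    iteratedDeriv n (fun z => c * f z) x = c * iteratedDeriv n f x := by
  simp only [← iteratedDerivWithin_univ]
  exact iteratedDerivWithin_const_mul (Set.mem_univ x) uniqueDiffOn_univ c h.contDiffAt.contDiffWithinAt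

private lemma iterDeriv_fsum {ι : Type*} {u : Finset ι} {f : ι → ℝ → ℝ} {n : ℕ}
    (h : ∀ j ∈ u, ContDiff ℝ n (f j)) (x : ℝ) :
    iteratedDeriv n (fun y => ∑ j ∈ u, f j y) x = ∑ j ∈ u, iteratedDeriv n (f j) x := by
  simp only [iteratedDeriv_eq_iteratedFDeriv]
  rw [show (fun y => ∑ j ∈ u, f j y) = (∑ j ∈ u, f j ·) from rfl, iteratedFDeriv_sum h]
  simp

theorem stmt_8 (a : ℝ → ℝ) (ha : ∀ x : ℝ, AnalyticAt ℝ a x)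
    (hnp : ¬ ∃ p : Polynomial ℝ, ∀ x : ℝ, a x = p.eval x)
    (m : ℕ) (hm : 0 < m) (x : Fin m → ℝ)
    (h0 : 0 < |x ⟨0, hm⟩|) (hmono : StrictMono fun i => |x i|)
    (l : Fin m → ℚ) (hl : l ≠ 0) :
    {γ ∈ Set.Icc (0:ℝ) 1 | ∑ i, (l i : ℝ) * a (γ * x i) = 0}.Finite := by
  by_contra hfin
  have hinf : {γ ∈ Set.Icc (0:ℝ) 1 | ∑ i, (l i : ℝ) * a (γ * x i) = 0}.Infinite := hfin
  obtain ⟨z₀, hz₀K, hacc⟩ := hinf.exists_accPt_of_subset_isCompact isCompact_Icc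
    (fun y hy => hy.1)
  have hfreq : ∃ᶠ y in 𝓝[≠] z₀, (∑ i, (l i : ℝ) * a (y * x i)) = 0 := by
    have h1 := (accPt_iff_frequently (x := z₀)).mp hacc
    rw [frequently_nhdsWithin_iff]
    exact h1.mono fun y hy => ⟨hy.2.2, hy.1⟩
  have hg : AnalyticOnNhd ℝ (fun γ => ∑ i, (l i : ℝ) * a (γ * x i)) Set.univ := by
    intro γ _
    apply Finset.analyticAt_fun_sum
    intro i _
    exact analyticAt_const.mul ((ha _).comp (analyticAt_id.mul analyticAt_const))
  have hg0 : ∀ γ : ℝ, ∑ i, (l i : ℝ) * a (γ * x i) = 0 := fun γ =>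
    hg.eqOn_zero_of_preconnected_of_frequently_eq_zero isPreconnected_univ (Set.mem_univ z₀)
      hfreq (Set.mem_univ γ)
  have hca : ∀ n : ℕ, ContDiff ℝ n a := fun n =>
    contDiff_iff_contDiffAt.2 fun y => (ha y).contDiffAt
  -- the key derivative identity
  have hA : ∀ n : ℕ, (∑ i, (l i : ℝ) * x i ^ n) * iteratedDeriv n a 0 = 0 := by
    intro n
    have hcd : ∀ i : Fin m, ContDiff ℝ n (fun γ => (l i : ℝ) * a (γ * x i)) := fun i =>
      contDiff_const.mul ((hca n).comp (contDiff_id.mul contDiff_const))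
    have h1 : iteratedDeriv n (fun γ => ∑ i, (l i : ℝ) * a (γ * x i)) 0 = 0 := by
      have he : (fun γ => ∑ i, (l i : ℝ) * a (γ * x i)) = fun _ : ℝ => (0:ℝ) := funext hg0
      rw [he]
      rw [iteratedDeriv_eq_iteratedFDeriv, iteratedFDeriv_zero_fun]
      simp
    rw [iterDeriv_fsum (fun i _ => hcd i) 0] at h1
    have h2 : ∀ i : Fin m, iteratedDeriv n (fun γ => (l i : ℝ) * a (γ * x i)) 0
        = (l i : ℝ) * (x i ^ n * iteratedDeriv n a 0) := by
      intro i
      have hcomp : ContDiff ℝ (n : ℕ∞) (fun γ : ℝ => a (γ * x i)) :=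
        (hca n).comp (contDiff_id.mul contDiff_const)
      rw [iterDeriv_cmul hcomp]
      congr 1
      have he : (fun γ : ℝ => a (γ * x i)) = fun γ : ℝ => a (x i * γ) := by
        funext γ; rw [mul_comm]
      rw [he, iteratedDeriv_comp_const_mul (hca n) (x i)]
      simp
    rw [Finset.sum_congr rfl (fun i _ => h2 i)] at h1
    calc (∑ i, (l i : ℝ) * x i ^ n) * iteratedDeriv n a 0
        = ∑ i, (l i : ℝ) * (x i ^ n * iteratedDeriv n a 0) := by
          rw [Finset.sum_mul]; exact Finset.sum_congr rfl fun i _ => by ring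
      _ = 0 := h1
  -- positivity of |x i|
  have hxpos : ∀ i, 0 < |x i| := by
    intro i
    have hle : (⟨0, hm⟩ : Fin m) ≤ i := by simp [Fin.le_def]
    exact lt_of_lt_of_le h0 (hmono.monotone hle)
  -- choose the top nonzero coefficient
  set T : Finset (Fin m) := Finset.univ.filter (fun i => l i ≠ 0) with hT
  have hTne : T.Nonempty := by
    rcases Function.ne_iff.mp hl with ⟨i, hi⟩
    simp only [Pi.zero_apply] at hi
    exact ⟨i, Finset.mem_filter.mpr ⟨Finset.mem_univ i, hi⟩⟩
  set j : Fin m := T.max' hTne with hj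
  have hlj : l j ≠ 0 := (Finset.mem_filter.mp (T.max'_mem hTne)).2
  have hljR : |(l j : ℝ)| > 0 := abs_pos.mpr (by exact_mod_cast hlj)
  have hlt : ∀ i : Fin m, i ≠ j → l i ≠ 0 → |x i| < |x j| := by
    intro i hij hi
    have hiT : i ∈ T := by simp [hT, hi]
    have := T.le_max' i hiT
    exact hmono (lt_of_le_of_ne this hij)
  -- the dominant coefficient beats the rest eventually
  have key : ∀ᶠ n in atTop,
      ∑ i ∈ Finset.univ.erase j, |(l i : ℝ)| * (|x i| / |x j|) ^ n < |(l j : ℝ)| := by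
    have h1 : Tendsto (fun n : ℕ => ∑ i ∈ Finset.univ.erase j,
        |(l i : ℝ)| * (|x i| / |x j|) ^ n) atTop (𝓝 0) := by
      rw [show (0:ℝ) = ∑ i ∈ Finset.univ.erase j, (0:ℝ) by simp]
      apply tendsto_finset_sum
      intro i hi
      rcases eq_or_ne (l i) 0 with h | h
      · simpa [h] using tendsto_const_nhds (α := ℕ) (x := (0:ℝ))
      · have hr : |x i| / |x j| < 1 :=
          (div_lt_one (hxpos j)).2 (hlt i (Finset.ne_of_mem_erase hi) h)
        have hr0 : 0 ≤ |x i| / |x j| := div_nonneg (abs_nonneg _) (abs_nonneg _)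
        simpa using (tendsto_pow_atTop_nhds_zero_of_lt_one hr0 hr).const_mul |(l i : ℝ)|
    exact h1.eventually_lt_const hljR
  have hsum_ne : ∀ᶠ n in atTop, (∑ i, (l i : ℝ) * x i ^ n) ≠ 0 := by
    filter_upwards [key] with n hn
    have hbound : |∑ i ∈ Finset.univ.erase j, (l i : ℝ) * x i ^ n|
        < |(l j : ℝ)| * |x j| ^ n := by
      calc |∑ i ∈ Finset.univ.erase j, (l i : ℝ) * x i ^ n|
          ≤ ∑ i ∈ Finset.univ.erase j, |(l i : ℝ) * x i ^ n| :=
            Finset.abs_sum_le_sum_abs _ _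
        _ = ∑ i ∈ Finset.univ.erase j, |(l i : ℝ)| * (|x i| / |x j|) ^ n * |x j| ^ n := by
            refine Finset.sum_congr rfl fun i _ => ?_
            rw [abs_mul, abs_pow, div_pow, mul_assoc,
              div_mul_cancel₀ _ (pow_ne_zero n (ne_of_gt (hxpos j)))]
        _ = (∑ i ∈ Finset.univ.erase j, |(l i : ℝ)| * (|x i| / |x j|) ^ n) * |x j| ^ n := by
            rw [Finset.sum_mul]
        _ < |(l j : ℝ)| * |x j| ^ n :=
            mul_lt_mul_of_pos_right hn (pow_pos (hxpos j) n)
    intro h0'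
    rw [← Finset.add_sum_erase _ _ (Finset.mem_univ j)] at h0'
    have heq : (l j : ℝ) * x j ^ n = -∑ i ∈ Finset.univ.erase j, (l i : ℝ) * x i ^ n := by
      linarith
    have : |(l j : ℝ)| * |x j| ^ n = |∑ i ∈ Finset.univ.erase j, (l i : ℝ) * x i ^ n| := by
      rw [← abs_pow, ← abs_mul, heq, abs_neg]
    linarith
  obtain ⟨N, hN⟩ := eventually_atTop.mp hsum_ne
  have hAzero : ∀ n, N ≤ n → iteratedDeriv n a 0 = 0 := by
    intro n hn
    rcases mul_eq_zero.mp (hA n) with h | h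
    · exact absurd h (hN n hn)
    · exact h
  -- build the polynomial
  set P : Polynomial ℝ :=
    ∑ n ∈ Finset.range N, Polynomial.C ((n ! : ℝ)⁻¹ * iteratedDeriv n a 0) * Polynomial.X ^ n
    with hP
  obtain ⟨p, r, hr⟩ := ha 0
  have hev : ∀ᶠ y in 𝓝 (0:ℝ), a y = P.eval y := by
    filter_upwards [EMetric.ball_mem_nhds (0:ℝ) hr.r_pos] with y hy
    have hs := hr.hasSum_iteratedFDeriv (y := y) hy
    have hterm : ∀ n : ℕ, (n ! : ℝ)⁻¹ • iteratedFDeriv ℝ n a 0 (fun _ : Fin n => y)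
        = (n ! : ℝ)⁻¹ * (iteratedDeriv n a 0 * y ^ n) := by
      intro n
      have he : (fun _ : Fin n => y) = fun _ : Fin n => y • (1:ℝ) := by funext; simp
      rw [he, (iteratedFDeriv ℝ n a 0).map_smul_univ, ← iteratedDeriv_eq_iteratedFDeriv]
      simp only [smul_eq_mul, smul_eq_mul, Finset.prod_const, Finset.card_univ,
        Fintype.card_fin, mul_one]
      ring
    have hs' : HasSum (fun n : ℕ => (n ! : ℝ)⁻¹ * (iteratedDeriv n a 0 * y ^ n)) (a y) := by
      have := hs
      simp_rw [hterm] at this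
      simpa using this
    have hz : ∀ n ∉ Finset.range N, (n ! : ℝ)⁻¹ * (iteratedDeriv n a 0 * y ^ n) = 0 := by
      intro n hn
      rw [hAzero n (by simpa using hn)]
      ring
    have hfs := (hasSum_sum_of_ne_finset_zero hz).unique hs'
    rw [← hfs, hP]
    simp only [Polynomial.eval_finset_sum, Polynomial.eval_mul, Polynomial.eval_C,
      Polynomial.eval_pow, Polynomial.eval_X]
    exact Finset.sum_congr rfl fun n _ => by ring
  have hPa : AnalyticOnNhd ℝ (fun y => P.eval y) Set.univ :=
    AnalyticOnNhd.eval_polynomial P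
  have haOn : AnalyticOnNhd ℝ a Set.univ := fun y _ => ha y
  have heq : Set.EqOn a (fun y => P.eval y) Set.univ := by
    apply haOn.eqOn_of_preconnected_of_frequently_eq hPa isPreconnected_univ (Set.mem_univ 0)
    exact (hev.filter_mono nhdsWithin_le_nhds).frequently
  exact hnp ⟨P, fun y => heq (Set.mem_univ y)⟩
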